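/- Let E be an election with Bucklin winning round k, let p be a designated candidate with nondecreasing cost functions π^i satisfying π^i(0)=0, and let t be a shift action that is minimal for making p a Bucklin winner. Then the Bucklin winning round ℓ of shf(E,t) satisfies k−1 ≤ ℓ ≤ k+1. -/
import Mathlib


/-- Shifting the designated candidate `p` upwards by `t i` positions in vote `i`. -/
def shiftRank {C : Type*} [DecidableEq C] {n : ℕ} (rank : Fin n → C → ℕ) (p : C)
    (t : Fin n → ℕ) : Fin n → C → ℕ := fun i c =>
  if c = p then max 1 (rank i p - t i)
  else if max 1 (rank i p - t i) ≤ rank i c ∧ rank i c < rank i p then rank i c + 1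
  else rank i c

/-- The `k`-Approval score of candidate `c`. -/
def approvalScoreAt {C : Type*} {n : ℕ} (rank : Fin n → C → ℕ) (k : ℕ) (c : C) : ℕ :=
  (Finset.univ.filter (fun i : Fin n => rank i c ≤ k)).card

/-- Candidate `c` has a majority at round `k`. -/
def majAt {C : Type*} {n : ℕ} (rank : Fin n → C → ℕ) (k : ℕ) (c : C) : Prop :=
  n / 2 + 1 ≤ approvalScoreAt rank k c

/-- `k` is the Bucklin winning round. -/
def IsBucklinRound {C : Type*} {n : ℕ} (rank : Fin n → C → ℕ) (k : ℕ) : Prop :=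
  IsLeast {j : ℕ | ∃ c : C, majAt rank j c} k

/-- `c` is a Bucklin winner. -/
def IsBucklinWinner {C : Type*} {n : ℕ} (rank : Fin n → C → ℕ) (c : C) : Prop :=
  ∃ k, IsBucklinRound rank k ∧
    ∀ c' : C, approvalScoreAt rank k c' ≤ approvalScoreAt rank k c

/-- The cost `Π(t)` of a shift action `t`. -/
def briberyCost {n : ℕ} (π : Fin n → ℕ → ℕ∞) (t : Fin n → ℕ) : ℕ∞ :=
  ∑ i, π i (t i)


lemma score_le_of_pointwise {C : Type*} {n : ℕ} (r r' : Fin n → C → ℕ) (c c' : C) (k k' : ℕ)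
    (h : ∀ i, r i c ≤ k → r' i c' ≤ k') :
    approvalScoreAt r k c ≤ approvalScoreAt r' k' c' := by
  apply Finset.card_le_card
  intro i hi
  simp only [Finset.mem_filter, Finset.mem_univ, true_and] at *
  exact h i hi

lemma rank_le_shiftRank {C : Type*} [DecidableEq C] {n : ℕ} (rank : Fin n → C → ℕ) (p : C)
    (t : Fin n → ℕ) (i : Fin n) (c : C) (hc : c ≠ p) :
    rank i c ≤ shiftRank rank p t i c := by
  simp only [shiftRank, if_neg hc]
  split <;> omega

/-- if `k` is the Bucklin winning round of the original election and `t` is a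
minimal optimal shift action making `p` a Bucklin winner, then the Bucklin winning round
`ℓ` of the shifted election satisfies `k − 1 ≤ ℓ ≤ k + 1`. -/
theorem statement7 {C : Type*} [Fintype C] [DecidableEq C] {n m : ℕ}
    (rank : Fin n → C → ℕ)
    (hcard : Fintype.card C = m)
    (hinj : ∀ i, Function.Injective (rank i))
    (hrange : ∀ i c, 1 ≤ rank i c ∧ rank i c ≤ m)
    (π : Fin n → ℕ → ℕ∞) (hπ0 : ∀ i, π i 0 = 0) (hπmono : ∀ i, Monotone (π i))
    (p : C) (t : Fin n → ℕ)
    (hwin : IsBucklinWinner (shiftRank rank p t) p)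
    (hopt : ∀ s : Fin n → ℕ, IsBucklinWinner (shiftRank rank p s) p →
      briberyCost π t ≤ briberyCost π s)
    (hmin : ∀ s : Fin n → ℕ, s ≠ t → (∀ i, s i ≤ t i) →
      ¬ IsBucklinWinner (shiftRank rank p s) p)
    (k : ℕ) (hk : IsBucklinRound rank k)
    (ℓ : ℕ) (hℓ : IsBucklinRound (shiftRank rank p t) ℓ) :
    k - 1 ≤ ℓ ∧ ℓ ≤ k + 1 := by
  -- majority at a round transfers back to the original election for candidates ≠ p
  have key : ∀ (s : Fin n → ℕ) (j : ℕ) (c : C), c ≠ p →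
      majAt (shiftRank rank p s) j c → majAt rank j c := by
    intro s j c hc hmaj
    refine le_trans hmaj (score_le_of_pointwise _ _ _ _ _ _ ?_)
    intro i hi
    exact le_trans (rank_le_shiftRank rank p s i c hc) hi
  constructor
  · -- lower bound k - 1 ≤ ℓ
    by_contra hcon
    have hlt : ℓ + 2 ≤ k := by omega
    obtain ⟨c, hc⟩ := hℓ.1
    by_cases hcp : c = p
    swap
    · exact absurd (hk.2 ⟨c, key t ℓ c hcp hc⟩) (by omega)
    rw [hcp] at hc; clear hcp
    -- p has majority at round ℓ in shifted election
    by_cases ht0 : ∀ i, t i = 0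
    · -- then shiftRank = rank, so ℓ = k
      have heq : shiftRank rank p t = rank := by
        funext i c
        have h1 := (hrange i p).1
        simp only [shiftRank, ht0 i]
        split
        · next h => subst h; omega
        · split
          · next h => omega
          · rfl
      rw [heq] at hℓ
      have := hℓ.2 hk.1
      have := hk.2 hℓ.1
      omega
    push_neg at ht0
    obtain ⟨i0, hi0⟩ := ht0
    set s : Fin n → ℕ := Function.update t i0 (t i0 - 1) with hs
    have hsle : ∀ i, s i ≤ t i := by
      intro i
      by_cases h : i = i0
      · subst h; simp [hs]
      · simp [hs, Function.update_of_ne h]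
    have hsne : s ≠ t := by
      intro h
      have := congrFun h i0
      simp [hs] at this
      omega
    -- p's rank in the s-shifted election exceeds that of the t-shifted by at most 1
    have hp1 : ∀ i, shiftRank rank p s i p ≤ shiftRank rank p t i p + 1 := by
      intro i
      simp only [shiftRank, if_pos rfl, if_true]
      by_cases h : i = i0
      · subst h
        simp only [hs, Function.update_self]
        omega
      · simp [hs, Function.update_of_ne h]
    -- p has majority at round ℓ+1 in the s-shifted election
    have hmajs : majAt (shiftRank rank p s) (ℓ + 1) p := by
      refine le_trans hc (score_le_of_pointwise _ _ _ _ _ _ ?_)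
      intro i hi
      have := hp1 i
      omega
    -- the s-shifted election has a Bucklin winning round ℓ'
    set S : Set ℕ := {j : ℕ | ∃ c : C, majAt (shiftRank rank p s) j c} with hS
    have hSne : (ℓ + 1) ∈ S := ⟨p, hmajs⟩
    set ℓ' : ℕ := sInf S with hℓ'
    have hℓ'mem : ℓ' ∈ S := Nat.sInf_mem ⟨ℓ + 1, hSne⟩
    have hℓ'least : IsBucklinRound (shiftRank rank p s) ℓ' :=
      ⟨hℓ'mem, fun j hj => Nat.sInf_le hj⟩
    have hℓ'le : ℓ' ≤ ℓ + 1 := Nat.sInf_le hSne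
    -- no candidate other than p has a majority at round ℓ' in the s-shifted election
    have hnomaj : ∀ c' : C, c' ≠ p → ¬ majAt (shiftRank rank p s) ℓ' c' := by
      intro c' hc' hmaj
      have := hk.2 ⟨c', key s ℓ' c' hc' hmaj⟩
      omega
    -- hence p has a majority at round ℓ'
    have hpmaj : majAt (shiftRank rank p s) ℓ' p := by
      obtain ⟨c', hc'⟩ := hℓ'mem
      by_cases h : c' = p
      · subst h; exact hc'
      · exact absurd hc' (hnomaj c' h)
    -- p is a Bucklin winner of the s-shifted election
    have hwins : IsBucklinWinner (shiftRank rank p s) p := by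
      refine ⟨ℓ', hℓ'least, ?_⟩
      intro c'
      by_cases h : c' = p
      · subst h; exact le_rfl
      · have h1 := hnomaj c' h
        simp only [majAt, not_le] at h1
        have h2 : n / 2 + 1 ≤ approvalScoreAt (shiftRank rank p s) ℓ' p := hpmaj
        omega
    exact hmin s hsne hsle hwins
  · -- upper bound ℓ ≤ k + 1
    obtain ⟨c, hc⟩ := hk.1
    refine hℓ.2 ⟨c, ?_⟩
    refine le_trans hc (score_le_of_pointwise _ _ _ _ _ _ ?_)
    intro i hi
    by_cases hcp : c = p
    · rw [hcp] at hi ⊢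
      have := (hrange i p).1
      simp only [shiftRank, if_pos rfl, if_true]
      omega
    · simp only [shiftRank, if_neg hcp]
      split <;> omega
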